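/- arXiv:math/9801071 — 3 statements merged into one kernel-verified Lean document; each statement's English description precedes it below -/
import Mathlib

section
/- Let A, B ∈ SL(2,ℂ) and suppose that tr(A), tr(B) and tr(A·B) are all real. Then every element C of the subgroup of SL(2,ℂ) generated by A and B has real trace. -/
open Matrix Complex

private lemma sq_eq' (M : Matrix (Fin 2) (Fin 2) ℂ) (h : M.det = 1) :
    M * M = M.trace • M - 1 := by
  rw [Matrix.det_fin_two] at h
  ext i j
  fin_cases i <;> fin_cases j <;>
    simp [Matrix.mul_apply, Matrix.trace_fin_two, Fin.sum_univ_two, Matrix.one_apply] <;>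
    (first | ring1 | linear_combination -h)

private lemma pol_eq' (M N : Matrix (Fin 2) (Fin 2) ℂ) :
    N * M = M.trace • N + N.trace • M + ((M*N).trace - M.trace * N.trace) • 1 - M * N := by
  ext i j
  fin_cases i <;> fin_cases j <;>
    simp [Matrix.mul_apply, Matrix.trace_fin_two, Fin.sum_univ_two, Matrix.one_apply] <;>
    ring

private lemma adj_eq' (M : Matrix (Fin 2) (Fin 2) ℂ) :
    M.adjugate = M.trace • 1 - M := by
  rw [Matrix.adjugate_fin_two]
  ext i j
  fin_cases i <;> fin_cases j <;>
    simp [Matrix.trace_fin_two, Matrix.one_apply]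

private lemma hAAB' (A B : Matrix (Fin 2) (Fin 2) ℂ) (hdA : A.det = 1) :
    A * (A * B) = A.trace • (A * B) - B := by
  rw [← mul_assoc, sq_eq' A hdA, sub_mul, smul_mul_assoc, one_mul]
private lemma hABB' (A B : Matrix (Fin 2) (Fin 2) ℂ) (hdB : B.det = 1) :
    (A * B) * B = B.trace • (A * B) - A := by
  rw [mul_assoc, sq_eq' B hdB, mul_sub, mul_smul_comm, mul_one]
private lemma hBAB' (A B : Matrix (Fin 2) (Fin 2) ℂ) (hdB : B.det = 1) :
    B * (A * B) = A + (A*B).trace • B - A.trace • 1 := by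
  rw [← mul_assoc, pol_eq' A B, sub_mul, add_mul, add_mul, smul_mul_assoc, smul_mul_assoc,
    smul_mul_assoc, one_mul, sq_eq' B hdB, hABB' A B hdB]
  module
private lemma hABA' (A B : Matrix (Fin 2) (Fin 2) ℂ) (hdA : A.det = 1) :
    (A * B) * A = B + (A*B).trace • A - B.trace • 1 := by
  rw [mul_assoc, pol_eq' A B, mul_sub, mul_add, mul_add, mul_smul_comm, mul_smul_comm,
    mul_smul_comm, mul_one, sq_eq' A hdA, hAAB' A B hdA]
  module
private lemma hABAB' (A B : Matrix (Fin 2) (Fin 2) ℂ) (hdA : A.det = 1) (hdB : B.det = 1) :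
    (A * B) * (A * B) = (A*B).trace • (A * B) - 1 := by
  refine sq_eq' _ ?_
  rw [Matrix.det_mul, hdA, hdB, mul_one]

/-- If `A, B ∈ SL(2,ℂ)` have real traces and `tr (A*B)` is real, then every element of the
subgroup generated by `A` and `B` has real trace. -/
theorem real_trace_of_mem_closure (A B : Matrix.SpecialLinearGroup (Fin 2) ℂ)
    (hA : (Matrix.trace ((A : Matrix (Fin 2) (Fin 2) ℂ))).im = 0)
    (hB : (Matrix.trace ((B : Matrix (Fin 2) (Fin 2) ℂ))).im = 0)
    (hAB : (Matrix.trace ((A * B : Matrix.SpecialLinearGroup (Fin 2) ℂ) :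
        Matrix (Fin 2) (Fin 2) ℂ)).im = 0)
    (C : Matrix.SpecialLinearGroup (Fin 2) ℂ) (hC : C ∈ Subgroup.closure {A, B}) :
    (Matrix.trace ((C : Matrix (Fin 2) (Fin 2) ℂ))).im = 0 := by
  have hdA : (A : Matrix (Fin 2) (Fin 2) ℂ).det = 1 := A.2
  have hdB : (B : Matrix (Fin 2) (Fin 2) ℂ).det = 1 := B.2
  set M : Matrix (Fin 2) (Fin 2) ℂ := (A : Matrix (Fin 2) (Fin 2) ℂ) with hM
  set N : Matrix (Fin 2) (Fin 2) ℂ := (B : Matrix (Fin 2) (Fin 2) ℂ) with hN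
  have hc : ((M * N).trace).im = 0 := by
    simpa [Matrix.SpecialLinearGroup.coe_mul] using hAB
  set a : ℂ := M.trace with ha'
  set b : ℂ := N.trace with hb'
  set c : ℂ := (M * N).trace with hc'
  have tr4 : ∀ p q r s : ℂ, p.im = 0 → q.im = 0 → r.im = 0 → s.im = 0 →
      ((p • (1 : Matrix (Fin 2) (Fin 2) ℂ) + q • M + r • N + s • (M * N)).trace).im = 0 := by
    intro p q r s hp hq hr hs
    rw [Matrix.trace_add, Matrix.trace_add, Matrix.trace_add, Matrix.trace_smul,
      Matrix.trace_smul, Matrix.trace_smul, Matrix.trace_smul, Matrix.trace_one,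
      ← ha', ← hb', ← hc']
    simp [smul_eq_mul, Complex.add_im, Complex.mul_im, hp, hq, hr, hs, hA, hB, hc]
  have key : ∀ x ∈ Subgroup.closure ({A, B} : Set (Matrix.SpecialLinearGroup (Fin 2) ℂ)),
      ∃ p q r s : ℂ, p.im = 0 ∧ q.im = 0 ∧ r.im = 0 ∧ s.im = 0 ∧
        (x : Matrix (Fin 2) (Fin 2) ℂ) = p • 1 + q • M + r • N + s • (M * N) := by
    intro x hx
    induction hx using Subgroup.closure_induction with
    | mem y hy =>
      simp only [Set.mem_insert_iff, Set.mem_singleton_iff] at hy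
      rcases hy with rfl | rfl
      · exact ⟨0, 1, 0, 0, rfl, rfl, rfl, rfl, by simp [hM]⟩
      · exact ⟨0, 0, 1, 0, rfl, rfl, rfl, rfl, by simp [hN]⟩
    | one => exact ⟨1, 0, 0, 0, rfl, rfl, rfl, rfl, by simp⟩
    | mul x y _ _ ihx ihy =>
      obtain ⟨p, q, r, s, hp, hq, hr, hs, hXe⟩ := ihx
      obtain ⟨p', q', r', s', hp', hq', hr', hs', hYe⟩ := ihy
      refine ⟨p*p' - q*q' + r*q'*(c - a*b) - r*r' - r*s'*a - s*q'*b - s*s',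
        p*q' + q*p' + q*q'*a + r*q'*b + r*s' + s*q'*c - s*r',
        p*r' + r*p' - q*s' + r*q'*a + r*r'*b + r*s'*c + s*q',
        p*s' + q*r' + q*s'*a - r*q' + s*p' + s*r'*b + s*s'*c,
        ?_, ?_, ?_, ?_, ?_⟩
      · simp [Complex.add_im, Complex.sub_im, Complex.mul_im, hp, hq, hr, hs, hp', hq', hr',
          hs', hA, hB, hc]
      · simp [Complex.add_im, Complex.sub_im, Complex.mul_im, hp, hq, hr, hs, hp', hq', hr',
          hs', hA, hB, hc]
      · simp [Complex.add_im, Complex.sub_im, Complex.mul_im, hp, hq, hr, hs, hp', hq', hr',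
          hs', hA, hB, hc]
      · simp [Complex.add_im, Complex.sub_im, Complex.mul_im, hp, hq, hr, hs, hp', hq', hr',
          hs', hA, hB, hc]
      · rw [Matrix.SpecialLinearGroup.coe_mul, hXe, hYe]
        simp only [add_mul, mul_add, smul_mul_assoc, mul_smul_comm, smul_smul, one_mul, mul_one,
          sq_eq' M hdA, sq_eq' N hdB, pol_eq' M N, hAAB' M N hdA, hABB' M N hdB,
          hBAB' M N hdB, hABA' M N hdA, hABAB' M N hdA hdB]
        rw [← ha', ← hb', ← hc']
        module
    | inv x _ ih =>
      obtain ⟨p, q, r, s, hp, hq, hr, hs, hXe⟩ := ih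
      have ht : ((x : Matrix (Fin 2) (Fin 2) ℂ).trace).im = 0 := by
        rw [hXe]; exact tr4 p q r s hp hq hr hs
      refine ⟨(x : Matrix (Fin 2) (Fin 2) ℂ).trace - p, -q, -r, -s,
        by simp [Complex.sub_im, ht, hp], by simp [hq], by simp [hr], by simp [hs], ?_⟩
      rw [Matrix.SpecialLinearGroup.coe_inv, adj_eq']
      rw [hXe]
      module
  obtain ⟨p, q, r, s, hp, hq, hr, hs, hCe⟩ := key C hC
  rw [hCe]
  exact tr4 p q r s hp hq hr hs
end

section
/- Let A, B ∈ SL(2,ℂ) be matrices with no common eigenvector in ℂ², and suppose tr(A), tr(B) and tr(A·B) are all real. Then there exists P ∈ GL(2,ℂ) such that either P·C·P⁻¹ has all real entries for every C in the subgroup generated by A and B, or P·C·P⁻¹ is unitary (lies in SU(2)) for every C in the subgroup generated by A and B. -/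
open Matrix Complex ComplexConjugate

abbrev Mat2 := Matrix (Fin 2) (Fin 2) ℂ
abbrev SL2 := Matrix.SpecialLinearGroup (Fin 2) ℂ

def IsRealM (M : Mat2) : Prop := ∀ i j : Fin 2, (M i j).im = 0

def NoCommonEig (A B : Mat2) : Prop :=
  ¬ ∃ v : Fin 2 → ℂ, v ≠ 0 ∧ (∃ μ : ℂ, A.mulVec v = μ • v) ∧ (∃ ν : ℂ, B.mulVec v = ν • v)

lemma real_entry_of_mul_real {r a : ℂ} (hr : r.im = 0) (hrne : r ≠ 0)
    (h : (r * a).im = 0) : a.im = 0 := by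
  have hre : r.re ≠ 0 := by
    intro h0; apply hrne; exact Complex.ext h0 hr
  have : r.re * a.im = 0 := by
    have := Complex.mul_im r a
    rw [h] at this; rw [hr] at this; simpa using this.symm
  exact (mul_eq_zero.mp this).resolve_left hre

lemma isRealM_mul {M N : Mat2} (hM : IsRealM M) (hN : IsRealM N) : IsRealM (M * N) := by
  intro i j
  rw [Matrix.mul_apply, Complex.im_sum]
  apply Finset.sum_eq_zero
  intro k _
  rw [Complex.mul_im, hM i k, hN k j]; ring

lemma isRealM_one : IsRealM (1 : Mat2) := by
  intro i j; fin_cases i <;> fin_cases j <;> simp [Matrix.one_apply]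

/-- every 2x2 complex matrix has an eigenvector -/
lemma exists_eigvec (M : Mat2) : ∃ v : Fin 2 → ℂ, v ≠ 0 ∧ ∃ μ : ℂ, M.mulVec v = μ • v := by
  obtain ⟨s, hs⟩ := IsAlgClosed.exists_pow_nat_eq (k := ℂ) ((M 0 0 + M 1 1)^2 - 4 * (M.det)) (n := 2) (by norm_num)
  set μ := (M 0 0 + M 1 1 + s) / 2 with hμ
  have hdet : (M - μ • 1).det = 0 := by
    rw [Matrix.det_fin_two]
    simp only [Matrix.sub_apply, Matrix.smul_apply, Matrix.one_apply]
    rw [Matrix.det_fin_two] at hs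
    simp only [Fin.isValue, ne_eq, zero_ne_one, not_false_eq_true, one_ne_zero]
    norm_num
    field_simp [hμ]
    ring_nf
    ring_nf at hs
    linear_combination (1/4:ℂ) * hs
  obtain ⟨v, hv, hveq⟩ := (Matrix.exists_mulVec_eq_zero_iff.mpr hdet)
  refine ⟨v, hv, μ, ?_⟩
  rw [Matrix.sub_mulVec, Matrix.smul_mulVec, Matrix.one_mulVec] at hveq
  exact sub_eq_zero.mp hveq

lemma noCommonEig_conj {A B : Mat2} (P Pi : Mat2) (h1 : P * Pi = 1) (h2 : Pi * P = 1)
    (hcom : NoCommonEig A B) : NoCommonEig (P * A * Pi) (P * B * Pi) := by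
  rintro ⟨v, hv, ⟨μ, hμ⟩, ⟨ν, hν⟩⟩
  apply hcom
  refine ⟨Pi.mulVec v, ?_, ⟨μ, ?_⟩, ⟨ν, ?_⟩⟩
  · intro h0
    apply hv
    have : (P * Pi).mulVec v = 0 := by
      rw [← Matrix.mulVec_mulVec, h0, Matrix.mulVec_zero]
    rwa [h1, Matrix.one_mulVec] at this
  · have := congrArg Pi.mulVec hμ
    rw [Matrix.mulVec_smul] at this
    rw [← this]
    rw [Matrix.mulVec_mulVec, Matrix.mulVec_mulVec, ← Matrix.mul_assoc, ← Matrix.mul_assoc,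
      h2, Matrix.one_mul]
  · have := congrArg Pi.mulVec hν
    rw [Matrix.mulVec_smul] at this
    rw [← this]
    rw [Matrix.mulVec_mulVec, Matrix.mulVec_mulVec, ← Matrix.mul_assoc, ← Matrix.mul_assoc,
      h2, Matrix.one_mul]

lemma eig_of_root (M : Mat2) (hdet : M.det = 1) (μ : ℂ)
    (hchar : μ ^ 2 - M.trace * μ + 1 = 0) : ∃ v, v ≠ 0 ∧ M.mulVec v = μ • v := by
  have hd0 : (M - μ • 1).det = 0 := by
    rw [Matrix.det_fin_two]
    simp only [Matrix.sub_apply, Matrix.smul_apply, Matrix.one_apply, smul_eq_mul]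
    rw [Matrix.det_fin_two] at hdet
    rw [Matrix.trace_fin_two] at hchar
    norm_num
    linear_combination hchar + hdet
  obtain ⟨v, hv, hveq⟩ := Matrix.exists_mulVec_eq_zero_iff.mpr hd0
  refine ⟨v, hv, ?_⟩
  rw [Matrix.sub_mulVec, Matrix.smul_mulVec, Matrix.one_mulVec] at hveq
  exact sub_eq_zero.mp hveq

def Qadj (Q : Mat2) : Mat2 := !![Q 1 1, -Q 0 1; -Q 1 0, Q 0 0]

lemma Qadj_pair {Q : Mat2} (h : Q.det = 1) : Q * Qadj Q = 1 ∧ Qadj Q * Q = 1 := by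
  constructor
  · have := Matrix.mul_adjugate Q
    rw [h, one_smul] at this
    rw [Qadj, ← Matrix.adjugate_fin_two]; exact this
  · have := Matrix.adjugate_mul Q
    rw [h, one_smul] at this
    rw [Qadj, ← Matrix.adjugate_fin_two]; exact this

lemma trace_conj {P Pi X : Mat2} (h2 : Pi * P = 1) : (P * X * Pi).trace = X.trace := by
  rw [Matrix.trace_mul_comm (P * X) Pi, ← Matrix.mul_assoc, h2, Matrix.one_mul]

lemma det_conj {P Pi X : Mat2} (h2 : Pi * P = 1) : (P * X * Pi).det = X.det := by
  have hPPi : P.det * Pi.det = 1 := by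
    have := congrArg Matrix.det h2
    rw [Matrix.det_mul, Matrix.det_one] at this
    linear_combination this
  rw [Matrix.det_mul, Matrix.det_mul]
  linear_combination X.det * hPPi

lemma diag_entries {A Q Qi : Mat2} (h2 : Qi * Q = 1) {μ : ℂ} {v : Fin 2 → ℂ} (j : Fin 2)
    (hQ : ∀ i, Q i j = v i) (hv : A.mulVec v = μ • v) :
    ∀ i, (Qi * A * Q) i j = μ * (1 : Mat2) i j := by
  intro i
  have hAQ : ∀ k, (A * Q) k j = μ * Q k j := by
    intro k
    rw [Matrix.mul_apply]
    simp_rw [hQ]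
    have := congrFun hv k
    simp only [Matrix.mulVec, dotProduct, Pi.smul_apply, smul_eq_mul] at this
    rw [this]
  rw [Matrix.mul_assoc, Matrix.mul_apply]
  simp_rw [hAQ]
  have : ∑ x : Fin 2, Qi i x * (μ * Q x j) = μ * ∑ x : Fin 2, Qi i x * Q x j := by
    rw [Finset.mul_sum]
    exact Finset.sum_congr rfl fun x _ => by ring
  rw [this, ← Matrix.mul_apply, h2]

lemma conj_chain {P Pi : Mat2} (h2 : Pi * P = 1) (C D : Mat2) :
    (P * C * Pi) * (P * D * Pi) = P * (C * D) * Pi := by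
  calc (P * C * Pi) * (P * D * Pi) = P * C * ((Pi * P) * (D * Pi)) := by
        simp only [Matrix.mul_assoc]
    _ = P * (C * D) * Pi := by rw [h2, one_mul]; simp only [Matrix.mul_assoc]
noncomputable def Tcay : Mat2 := !![1, -Complex.I; -Complex.I, 1]
noncomputable def Tcayi : Mat2 := !![1/2, Complex.I/2; Complex.I/2, 1/2]

lemma Tcay_pair : Tcay * Tcayi = 1 ∧ Tcayi * Tcay = 1 := by
  constructor <;>
  · rw [Tcay, Tcayi]
    ext i j
    fin_cases i <;> fin_cases j <;>
      simp [Matrix.mul_fin_two, Matrix.one_apply] <;> ring_nf <;>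
      first
        | norm_num
        | simp [Complex.ext_iff]

lemma cayley_real' (p q : ℂ) :
    ∀ i j : Fin 2, ((Tcay * !![p, q; conj q, conj p] * Tcayi) i j).im = 0 := by
  intro i j
  rw [Tcay, Tcayi]
  fin_cases i <;> fin_cases j <;>
    · simp [Matrix.mul_fin_two, Complex.add_im, Complex.add_re, Complex.mul_im,
        Complex.mul_re, Complex.div_im, Complex.div_re, Complex.normSq,
        Complex.conj_re, Complex.conj_im]
      ring

lemma cayley_real (M : Mat2) (h1 : M 1 0 = conj (M 0 1)) (h2 : M 1 1 = conj (M 0 0)) :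
    ∀ i j : Fin 2, ((Tcay * M * Tcayi) i j).im = 0 := by
  have hM : M = !![M 0 0, M 0 1; conj (M 0 1), conj (M 0 0)] := by
    conv_lhs => rw [Matrix.eta_fin_two M]
    rw [h1, h2]
  rw [hM]
  exact cayley_real' (M 0 0) (M 0 1)

lemma diag_mul (p q : ℂ) (h : p * q = 1) : (!![p,0;0,(1:ℂ)] : Mat2) * !![q,0;0,1] = 1 := by
  ext i j
  fin_cases i <;> fin_cases j <;> simp [Matrix.mul_fin_two, h, Matrix.one_apply]

lemma sandwich (p q a b c d : ℂ) :
    (!![p,0;0,(1:ℂ)] : Mat2) * !![a,b;c,d] * !![q,0;0,1] = !![p*a*q, p*b; c*q, d] := by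
  ext i j
  fin_cases i <;> fin_cases j <;> simp [Matrix.mul_fin_two] <;> ring

lemma star_fin_two (p q r s : ℂ) :
    star (!![p, q; r, s] : Mat2) = !![conj p, conj r; conj q, conj s] := by
  ext i j
  fin_cases i <;> fin_cases j <;> simp [Matrix.conjTranspose_apply]
lemma key_case3 (A B : Mat2) (hdA : A.det = 1) (hdB : B.det = 1) (hcom : NoCommonEig A B)
    (hBtr : B.trace.im = 0) (hABtr : ((A * B).trace).im = 0)
    (lam : ℂ) (v : Fin 2 → ℂ) (hv0 : v ≠ 0) (hv : A.mulVec v = lam • v)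
    (hsq : lam ^ 2 = 1) :
    ∃ P Pi : Mat2, P * Pi = 1 ∧ Pi * P = 1 ∧ IsRealM (P * A * Pi) ∧ IsRealM (P * B * Pi) := by
  have hlam0 : lam ≠ 0 := by
    intro h; rw [h] at hsq; norm_num at hsq
  have hlamim : lam.im = 0 := by
    have h12 : (lam - 1) * (lam + 1) = 0 := by linear_combination hsq
    rcases mul_eq_zero.mp h12 with h | h
    · have : lam = 1 := by linear_combination h
      simp [this]
    · have : lam = -1 := by linear_combination h
      simp [this]
  -- the triangularizing conjugator
  set Δ : ℝ := normSq (v 0) + normSq (v 1) with hΔ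
  have hΔpos : 0 < Δ := by
    have hvi : v 0 ≠ 0 ∨ v 1 ≠ 0 := by
      by_contra h
      push_neg at h
      exact hv0 (funext fun i => by fin_cases i <;> simp [h.1, h.2])
    rcases hvi with h | h
    · have := Complex.normSq_pos.mpr h
      have := Complex.normSq_nonneg (v 1)
      rw [hΔ]; linarith
    · have := Complex.normSq_pos.mpr h
      have := Complex.normSq_nonneg (v 0)
      rw [hΔ]; linarith
  have hΔne : (Δ : ℂ) ≠ 0 := by
    simp only [ne_eq, Complex.ofReal_eq_zero]
    linarith
  set Q : Mat2 := !![v 0, -conj (v 1) / Δ; v 1, conj (v 0) / Δ] with hQdef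
  have hdetQ : Q.det = 1 := by
    rw [hQdef, Matrix.det_fin_two_of]
    have h0 : v 0 * conj (v 0) = (normSq (v 0) : ℂ) := Complex.mul_conj (v 0)
    have h1 : v 1 * conj (v 1) = (normSq (v 1) : ℂ) := Complex.mul_conj (v 1)
    field_simp
    rw [hΔ]
    push_cast
    linear_combination h0 + h1
  set Qi : Mat2 := Qadj Q with hQidef
  obtain ⟨hQ1, hQ2⟩ := Qadj_pair hdetQ
  have hQcol : ∀ i, Q i 0 = v i := by
    intro i; fin_cases i <;> simp [hQdef]
  set A1 : Mat2 := Qi * A * Q with hA1def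
  set B1 : Mat2 := Qi * B * Q with hB1def
  have hA1col := diag_entries hQ2 0 hQcol hv
  have hA1_10 : A1 1 0 = 0 := by
    have := hA1col 1
    simpa [Matrix.one_apply] using this
  have hA1_00 : A1 0 0 = lam := by
    have := hA1col 0
    simpa [Matrix.one_apply] using this
  have hdetA1 : A1.det = 1 := by rw [hA1def]; exact (det_conj hQ1).trans hdA
  have hA1_11 : A1 1 1 = lam := by
    rw [Matrix.det_fin_two, hA1_10, hA1_00] at hdetA1
    have h2 : lam * A1 1 1 = lam * lam := by
      rw [← sq]; rw [hsq]; linear_combination hdetA1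
    exact mul_left_cancel₀ hlam0 h2
  have hcom1 : NoCommonEig A1 B1 := noCommonEig_conj Qi Q hQ2 hQ1 hcom
  set β : ℂ := A1 0 1 with hβdef
  have hβ : β ≠ 0 := by
    intro h0
    apply hcom1
    obtain ⟨w, hw0, ν, hwv⟩ := exists_eigvec B1
    refine ⟨w, hw0, ⟨lam, ?_⟩, ⟨ν, hwv⟩⟩
    have hA1eq : A1 = lam • (1 : Mat2) := by
      ext i j
      fin_cases i <;> fin_cases j <;>
        simp [hA1_00, hA1_10, hA1_11, ← hβdef, h0, Matrix.one_apply]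
    rw [hA1eq, Matrix.smul_mulVec, Matrix.one_mulVec]
  have hA1eta : A1 = !![lam, β; 0, lam] := by
    ext i j
    fin_cases i <;> fin_cases j <;> simp [hA1_00, hA1_10, hA1_11, ← hβdef]
  set S : Mat2 := !![β⁻¹, 0; 0, 1] with hSdef
  set Si : Mat2 := !![β, 0; 0, 1] with hSidef
  have hS1 : S * Si = 1 := by
    rw [hSdef, hSidef]
    ext i j
    fin_cases i <;> fin_cases j <;>
      simp [Matrix.mul_fin_two, Matrix.one_apply, inv_mul_cancel₀ hβ]
  have hS2 : Si * S = 1 := by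
    rw [hSdef, hSidef]
    ext i j
    fin_cases i <;> fin_cases j <;>
      simp [Matrix.mul_fin_two, Matrix.one_apply, mul_inv_cancel₀ hβ]
  set P1 : Mat2 := S * Qi with hP1def
  set P1i : Mat2 := Q * Si with hP1idef
  have hP11 : P1 * P1i = 1 := by
    rw [hP1def, hP1idef]
    calc S * Qi * (Q * Si) = S * (Qi * Q) * Si := by simp only [Matrix.mul_assoc]
      _ = 1 := by rw [hQ2, mul_one, hS1]
  have hP12 : P1i * P1 = 1 := by
    rw [hP1def, hP1idef]
    calc Q * Si * (S * Qi) = Q * (Si * S) * Qi := by simp only [Matrix.mul_assoc]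
      _ = 1 := by rw [hS2, mul_one, hQ1]
  set A2 : Mat2 := P1 * A * P1i with hA2def
  set B2 : Mat2 := P1 * B * P1i with hB2def
  have hA2S : A2 = S * A1 * Si := by
    rw [hA2def, hA1def, hP1def, hP1idef]; simp only [Matrix.mul_assoc]
  have hA2eta : A2 = !![lam, 1; 0, lam] := by
    rw [hA2S, hA1eta, hSdef, hSidef]
    ext i j
    fin_cases i <;> fin_cases j <;> simp [Matrix.mul_fin_two] <;>
      field_simp [hβ] <;> ring
  set a2 : ℂ := B2 0 0 with ha2def
  set b2 : ℂ := B2 0 1 with hb2def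
  set c2 : ℂ := B2 1 0 with hc2def
  set d2 : ℂ := B2 1 1 with hd2def
  have hB2eta : B2 = !![a2, b2; c2, d2] := Matrix.eta_fin_two B2
  have hy : a2 + d2 = B.trace := by
    have := trace_conj (P := P1) (Pi := P1i) (X := B) hP12
    rw [← hB2def] at this
    rw [Matrix.trace_fin_two] at this
    exact this
  have hz : lam * a2 + c2 + lam * d2 = (A * B).trace := by
    have hAB2 : A2 * B2 = P1 * (A * B) * P1i := by
      rw [hA2def, hB2def]; exact conj_chain hP12 A B
    have := trace_conj (P := P1) (Pi := P1i) (X := A * B) hP12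
    rw [← hAB2] at this
    rw [Matrix.trace_fin_two, hA2eta, hB2eta] at this
    simp [Matrix.mul_fin_two] at this
    linear_combination this
  have hc2 : c2 = (A * B).trace - lam * B.trace := by
    linear_combination hz - lam * hy
  have hc2im : c2.im = 0 := by
    rw [hc2, Complex.sub_im, Complex.mul_im, hlamim, hBtr, hABtr]
    ring
  have hcom2 : NoCommonEig A2 B2 := noCommonEig_conj P1 P1i hP11 hP12 hcom
  have hc2ne : c2 ≠ 0 := by
    intro h0
    apply hcom2
    refine ⟨![1, 0], ?_, ⟨lam, ?_⟩, ⟨a2, ?_⟩⟩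
    · intro h
      have := congrFun h 0
      simp at this
    · rw [hA2eta]
      funext i
      fin_cases i <;> simp [Matrix.mulVec, dotProduct, Fin.sum_univ_two]
    · rw [hB2eta]
      funext i
      fin_cases i <;> simp [Matrix.mulVec, dotProduct, Fin.sum_univ_two, ← hc2def, h0]
  set y : ℂ := B.trace with hydef
  set u : ℂ := (y / 2 - a2) / c2 with hudef
  set U : Mat2 := !![1, u; 0, 1] with hUdef
  set Ui : Mat2 := !![1, -u; 0, 1] with hUidef
  have hU1 : U * Ui = 1 := by
    rw [hUdef, hUidef]
    ext i j
    fin_cases i <;> fin_cases j <;> simp [Matrix.mul_fin_two, Matrix.one_apply]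
  have hU2 : Ui * U = 1 := by
    rw [hUdef, hUidef]
    ext i j
    fin_cases i <;> fin_cases j <;> simp [Matrix.mul_fin_two, Matrix.one_apply]
  refine ⟨U * P1, P1i * Ui, ?_, ?_, ?_, ?_⟩
  · calc U * P1 * (P1i * Ui) = U * (P1 * P1i) * Ui := by simp only [Matrix.mul_assoc]
      _ = 1 := by rw [hP11, mul_one, hU1]
  · calc P1i * Ui * (U * P1) = P1i * (Ui * U) * P1 := by simp only [Matrix.mul_assoc]
      _ = 1 := by rw [hU2, mul_one, hP12]
  · -- A part real
    have : U * P1 * A * (P1i * Ui) = U * A2 * Ui := by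
      rw [hA2def]; simp only [Matrix.mul_assoc]
    have hE : U * !![lam, (1:ℂ); 0, lam] * Ui = !![lam, 1; 0, lam] := by
      rw [hUdef, hUidef]
      ext i j
      fin_cases i <;> fin_cases j <;> simp [Matrix.mul_fin_two] <;> ring
    rw [this, hA2eta, hE]
    intro i j
    fin_cases i <;> fin_cases j <;> simp [hlamim]
  · -- B part real
    have hB3 : U * P1 * B * (P1i * Ui) = U * B2 * Ui := by
      rw [hB2def]; simp only [Matrix.mul_assoc]
    rw [hB3]
    have hB3det : (U * B2 * Ui).det = 1 := by
      have e : U * B2 * Ui = (U * P1) * B * (P1i * Ui) := by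
        rw [hB2def]; simp only [Matrix.mul_assoc]
      rw [e]
      have hpair2 : (P1i * Ui) * (U * P1) = 1 := by
        calc P1i * Ui * (U * P1) = P1i * (Ui * U) * P1 := by simp only [Matrix.mul_assoc]
          _ = 1 := by rw [hU2, mul_one, hP12]
      exact (det_conj hpair2).trans hdB
    have hyim : y.im = 0 := hBtr
    -- explicit form of U * B2 * Ui
    set b3 : ℂ := -((a2 + u * c2) * u) + (b2 + u * d2) with hb3def
    have hUBU : U * B2 * Ui = !![a2 + u * c2, b3; c2, -(c2 * u) + d2] := by
      rw [hB2eta, hUdef, hUidef, hb3def]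
      ext i j
      fin_cases i <;> fin_cases j <;> simp [Matrix.mul_fin_two] <;> ring
    have h00 : a2 + u * c2 = y / 2 := by
      rw [hudef, div_mul_cancel₀ _ hc2ne]
      ring
    have h11 : -(c2 * u) + d2 = y / 2 := by
      rw [hudef, mul_comm c2, div_mul_cancel₀ _ hc2ne]
      linear_combination hy
    have hyhalf : (y / 2).im = 0 := by
      rw [Complex.div_im, hyim]
      norm_num
    have hb3 : b3.im = 0 := by
      have hdetexp : (a2 + u * c2) * (-(c2 * u) + d2) - b3 * c2 = 1 := by
        rw [hUBU, Matrix.det_fin_two_of] at hB3det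
        exact hB3det
      rw [h00, h11] at hdetexp
      have hcb : c2 * b3 = (y / 2) * (y / 2) - 1 := by linear_combination -hdetexp
      apply real_entry_of_mul_real hc2im hc2ne
      rw [hcb, Complex.sub_im, Complex.mul_im, hyhalf]
      norm_num
    rw [hUBU]
    intro i j
    fin_cases i <;> fin_cases j <;>
      simp only [Matrix.cons_val', Matrix.cons_val_zero, Matrix.cons_val_one,
        Matrix.head_cons, Matrix.head_fin_const, Matrix.empty_val',
        Matrix.cons_val_fin_one, Matrix.of_apply]
    · rw [h00]; exact hyhalf
    · exact hb3
    · exact hc2im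
    · rw [h11]; exact hyhalf
set_option maxHeartbeats 1000000 in
lemma key_case12 (A B : Mat2) (hdA : A.det = 1) (hdB : B.det = 1) (hcom : NoCommonEig A B)
    (hAtr : A.trace.im = 0) (hBtr : B.trace.im = 0) (hABtr : ((A * B).trace).im = 0)
    (lam : ℂ) (v : Fin 2 → ℂ) (hv0 : v ≠ 0) (hv : A.mulVec v = lam • v)
    (hchar : lam ^ 2 - A.trace * lam + 1 = 0) (hsq : lam ^ 2 ≠ 1) :
    ∃ P Pi : Mat2, P * Pi = 1 ∧ Pi * P = 1 ∧
      ((IsRealM (P * A * Pi) ∧ IsRealM (P * B * Pi)) ∨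
       ((P * A * Pi) ∈ Matrix.unitaryGroup (Fin 2) ℂ ∧
        (P * B * Pi) ∈ Matrix.unitaryGroup (Fin 2) ℂ)) := by
  have hlam0 : lam ≠ 0 := by
    intro h; rw [h] at hchar; norm_num at hchar
  have hlamne : lam ≠ lam⁻¹ := by
    intro h
    apply hsq
    rw [sq]
    nth_rewrite 2 [h]
    exact mul_inv_cancel₀ hlam0
  have hchar2 : (lam⁻¹) ^ 2 - A.trace * lam⁻¹ + 1 = 0 := by
    have h2 : lam ^ 2 * ((lam⁻¹) ^ 2 - A.trace * lam⁻¹ + 1) =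
        lam ^ 2 - A.trace * lam + 1 := by
      field_simp
      ring
    have h3 : lam ^ 2 * ((lam⁻¹) ^ 2 - A.trace * lam⁻¹ + 1) = 0 := by
      rw [h2, hchar]
    rcases mul_eq_zero.mp h3 with h | h
    · exact absurd (pow_eq_zero_iff (by norm_num) |>.mp h) hlam0
    · exact h
  obtain ⟨w0, hw00, hw0⟩ := eig_of_root A hdA lam⁻¹ hchar2
  set δ : ℂ := v 0 * w0 1 - w0 0 * v 1 with hδdef
  have hδ : δ ≠ 0 := by
    intro hδ0
    have hδ0' : v 0 * w0 1 - w0 0 * v 1 = 0 := by rw [← hδdef]; exact hδ0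
    obtain ⟨c, hw0c⟩ : ∃ c : ℂ, w0 = c • v := by
      rcases eq_or_ne (v 0) 0 with h0 | h0
      · have h1 : v 1 ≠ 0 := by
          intro h1
          exact hv0 (funext fun i => by fin_cases i <;> simp [h0, h1])
        refine ⟨w0 1 / v 1, funext fun i => ?_⟩
        fin_cases i <;> simp [Pi.smul_apply, smul_eq_mul]
        · rw [h0, mul_zero]
          have hzero : w0 0 * v 1 = 0 := by linear_combination -hδ0' + w0 1 * h0
          rcases mul_eq_zero.mp hzero with h | h
          · exact h
          · exact absurd h h1
        · field_simp
      · refine ⟨w0 0 / v 0, funext fun i => ?_⟩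
        fin_cases i <;> simp [Pi.smul_apply, smul_eq_mul]
        · field_simp
        · rw [div_mul_eq_mul_div, eq_div_iff h0]
          linear_combination hδ0'
    have hcne : c ≠ 0 := by
      intro h
      apply hw00
      rw [hw0c, h, zero_smul]
    obtain ⟨i0, hvi0⟩ : ∃ i, v i ≠ 0 := by
      by_contra h; push_neg at h; exact hv0 (funext fun i => h i)
    have heq : (lam⁻¹ • w0) i0 = (c • lam • v) i0 := by
      rw [← hw0]
      rw [hw0c, Matrix.mulVec_smul, hv]
    rw [hw0c] at heq
    simp only [Pi.smul_apply, smul_eq_mul] at heq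
    have : lam⁻¹ * c * v i0 = lam * c * v i0 := by linear_combination heq
    have h1 := mul_right_cancel₀ hvi0 this
    have h2 := mul_right_cancel₀ hcne h1
    exact hlamne h2.symm
  set w : Fin 2 → ℂ := δ⁻¹ • w0 with hwdef
  have hw : A.mulVec w = lam⁻¹ • w := by
    rw [hwdef, Matrix.mulVec_smul, hw0, smul_comm]
  set Q : Mat2 := !![v 0, w 0; v 1, w 1] with hQdef
  have hdetQ : Q.det = 1 := by
    rw [hQdef, Matrix.det_fin_two_of, hwdef]
    simp only [Pi.smul_apply, smul_eq_mul]
    field_simp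
    try linear_combination hδdef
  set Qi : Mat2 := Qadj Q with hQidef
  obtain ⟨hQ1, hQ2⟩ := Qadj_pair hdetQ
  rw [← hQidef] at hQ1 hQ2
  have hQcol0 : ∀ i, Q i 0 = v i := by
    intro i; fin_cases i <;> simp [hQdef]
  have hQcol1 : ∀ i, Q i 1 = w i := by
    intro i; fin_cases i <;> simp [hQdef]
  set A1 : Mat2 := Qi * A * Q with hA1def
  set B1 : Mat2 := Qi * B * Q with hB1def
  have hA1c0 := diag_entries hQ2 0 hQcol0 hv
  have hA1c1 := diag_entries hQ2 1 hQcol1 hw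
  have hA1eta : A1 = !![lam, 0; 0, lam⁻¹] := by
    ext i j
    fin_cases i <;> fin_cases j
    · simpa [Matrix.one_apply] using hA1c0 0
    · simpa [Matrix.one_apply] using hA1c1 0
    · simpa [Matrix.one_apply] using hA1c0 1
    · simpa [Matrix.one_apply] using hA1c1 1
  have hcom1 : NoCommonEig A1 B1 := noCommonEig_conj Qi Q hQ2 hQ1 hcom
  set a : ℂ := B1 0 0 with hadef
  set b : ℂ := B1 0 1 with hbdef
  set c : ℂ := B1 1 0 with hcdef
  set d : ℂ := B1 1 1 with hddef
  have hB1eta : B1 = !![a, b; c, d] := Matrix.eta_fin_two B1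
  clear_value δ w Q Qi A1 B1
  set y : ℂ := B.trace with hydef
  set z : ℂ := (A * B).trace with hzdef
  have hy : a + d = y := by
    have := trace_conj (P := Qi) (Pi := Q) (X := B) hQ1
    rw [← hB1def] at this
    rw [Matrix.trace_fin_two] at this
    rw [← hadef, ← hddef, ← hydef] at this
    exact this
  have hz : lam * a + lam⁻¹ * d = z := by
    have hAB1 : A1 * B1 = Qi * (A * B) * Q := by
      rw [hA1def, hB1def]; exact conj_chain hQ1 A B
    have := trace_conj (P := Qi) (Pi := Q) (X := A * B) hQ1
    rw [← hAB1] at this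
    rw [Matrix.trace_fin_two, hA1eta, hB1eta] at this
    simp [Matrix.mul_fin_two] at this
    rw [← hzdef] at this
    linear_combination this
  have hdetB1 : a * d - b * c = 1 := by
    have : B1.det = 1 := by rw [hB1def]; exact (det_conj hQ1).trans hdB
    rw [Matrix.det_fin_two] at this
    exact this
  have hbne : b ≠ 0 := by
    intro h0
    apply hcom1
    refine ⟨![0, 1], ?_, ⟨lam⁻¹, ?_⟩, ⟨d, ?_⟩⟩
    · intro h
      have := congrFun h 1
      simp at this
    · rw [hA1eta]
      funext i
      fin_cases i <;> simp [Matrix.mulVec, dotProduct, Fin.sum_univ_two]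
    · rw [hB1eta]
      funext i
      fin_cases i <;> simp [Matrix.mulVec, dotProduct, Fin.sum_univ_two, h0]
  have hcne : c ≠ 0 := by
    intro h0
    apply hcom1
    refine ⟨![1, 0], ?_, ⟨lam, ?_⟩, ⟨a, ?_⟩⟩
    · intro h
      have := congrFun h 0
      simp at this
    · rw [hA1eta]
      funext i
      fin_cases i <;> simp [Matrix.mulVec, dotProduct, Fin.sum_univ_two]
    · rw [hB1eta]
      funext i
      fin_cases i <;> simp [Matrix.mulVec, dotProduct, Fin.sum_univ_two, h0]
  have hyim : y.im = 0 := hBtr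
  have hzim : z.im = 0 := hABtr
  clear_value a b c d y z
  rcases eq_or_ne lam.im 0 with hre | him
  · -- λ real : conjugate into SL(2,ℝ)
    have hinv_im : (lam⁻¹).im = 0 := by
      simp [Complex.inv_im, hre]
    have hdiffim : (lam - lam⁻¹).im = 0 := by
      rw [Complex.sub_im, hre, hinv_im]; ring
    have hdiffne : lam - lam⁻¹ ≠ 0 := sub_ne_zero.mpr hlamne
    have ha_im : a.im = 0 := by
      apply real_entry_of_mul_real hdiffim hdiffne
      have : (lam - lam⁻¹) * a = z - lam⁻¹ * y := by
        linear_combination hz - lam⁻¹ * hy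
      rw [this, Complex.sub_im, Complex.mul_im, hinv_im, hyim, hzim]
      ring
    have hd_im : d.im = 0 := by
      have : d = y - a := by linear_combination hy
      rw [this, Complex.sub_im, hyim, ha_im]; ring
    have hbc_im : (b * c).im = 0 := by
      have : b * c = a * d - 1 := by linear_combination -hdetB1
      rw [this, Complex.sub_im, Complex.mul_im, ha_im, hd_im]
      simp
    refine ⟨!![b⁻¹,0;0,1] * Qi, Q * !![b,0;0,1], ?_, ?_, Or.inl ⟨?_, ?_⟩⟩
    · calc !![b⁻¹,0;0,1] * Qi * (Q * !![b,0;0,1])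
          = !![b⁻¹,0;0,(1:ℂ)] * (Qi * Q) * !![b,0;0,1] := by simp only [Matrix.mul_assoc]
        _ = 1 := by rw [hQ2, mul_one]; exact diag_mul _ _ (inv_mul_cancel₀ hbne)
    · calc Q * !![b,0;0,1] * (!![b⁻¹,0;0,1] * Qi)
          = Q * (!![b,0;0,(1:ℂ)] * !![b⁻¹,0;0,1]) * Qi := by simp only [Matrix.mul_assoc]
        _ = 1 := by rw [diag_mul _ _ (mul_inv_cancel₀ hbne), mul_one, hQ1]
    · have e : !![b⁻¹,0;0,1] * Qi * A * (Q * !![b,0;0,1])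
          = !![b⁻¹,0;0,(1:ℂ)] * A1 * !![b,0;0,1] := by
        rw [hA1def]; simp only [Matrix.mul_assoc]
      rw [e, hA1eta, sandwich]
      have e2 : b⁻¹ * lam * b = lam := by
        rw [mul_comm b⁻¹ lam, mul_assoc, inv_mul_cancel₀ hbne, mul_one]
      rw [e2, mul_zero, zero_mul]
      intro i j
      fin_cases i <;> fin_cases j <;> simp [hre, hinv_im]
    · have e : !![b⁻¹,0;0,1] * Qi * B * (Q * !![b,0;0,1])
          = !![b⁻¹,0;0,(1:ℂ)] * B1 * !![b,0;0,1] := by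
        rw [hB1def]; simp only [Matrix.mul_assoc]
      rw [e, hB1eta, sandwich]
      have e2 : b⁻¹ * a * b = a := by
        rw [mul_comm b⁻¹ a, mul_assoc, inv_mul_cancel₀ hbne, mul_one]
      have e3 : b⁻¹ * b = 1 := inv_mul_cancel₀ hbne
      rw [e2, e3]
      intro i j
      fin_cases i <;> fin_cases j <;>
        simp [ha_im, hd_im, mul_comm c b, hbc_im]
  · -- λ on unit circle : SU(2) or SU(1,1)
    set κ : ℂ := conj lam with hκdef
    have hκ0 : κ ≠ 0 := by
      rw [hκdef]
      intro h
      apply hlam0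
      have := congrArg conj h
      simpa using this
    have hxlam : lam + lam⁻¹ = A.trace := by
      have h2 : lam * (lam + lam⁻¹ - A.trace) = lam ^ 2 - A.trace * lam + 1 := by
        field_simp; ring
      have h3 : lam * (lam + lam⁻¹ - A.trace) = 0 := by rw [h2, hchar]
      rcases mul_eq_zero.mp h3 with h | h
      · exact absurd h hlam0
      · linear_combination h
    have hxconj : conj A.trace = A.trace := Complex.conj_eq_iff_im.mpr hAtr
    have hκx : κ + κ⁻¹ = A.trace := by
      have := congrArg conj hxlam
      rw [map_add, map_inv₀, hxconj] at this
      exact this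
    have hκne : κ ≠ lam := by
      intro h
      apply him
      rw [← Complex.conj_eq_iff_im, ← hκdef, h]
    have hunit : κ * lam = 1 := by
      have heq : κ + κ⁻¹ = lam + lam⁻¹ := by rw [hκx, hxlam]
      have hkey : (κ - lam) * (κ * lam - 1) = 0 := by
        have h2 : κ * lam * (κ + κ⁻¹ - (lam + lam⁻¹)) = (κ - lam) * (κ * lam - 1) := by
          field_simp
          ring
        rw [← h2]
        rw [show κ + κ⁻¹ - (lam + lam⁻¹) = 0 by rw [heq]; ring]
        ring
      rcases mul_eq_zero.mp hkey with h | h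
      · exact absurd (by linear_combination h) hκne
      · linear_combination h
    have hlaminv : lam⁻¹ = κ := by
      field_simp
      linear_combination -hunit
    have hκinv : κ⁻¹ = lam := by
      rw [← hlaminv]
      simp [hlam0]
    -- d = conj a
    have hyconj : conj y = y := Complex.conj_eq_iff_im.mpr hyim
    have hzconj : conj z = z := Complex.conj_eq_iff_im.mpr hzim
    have hyc : conj a + conj d = y := by
      have := congrArg conj hy
      rwa [map_add, hyconj] at this
    have hzc : lam⁻¹ * conj a + lam * conj d = z := by
      have := congrArg conj hz
      rw [_root_.map_add, _root_.map_mul, _root_.map_mul, map_inv₀, hzconj] at this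
      rw [← hκdef] at this
      rw [hκinv] at this
      rw [← hlaminv] at this
      exact this
    have hd : d = conj a := by
      have hdiff : (lam⁻¹ - lam) * (d - conj a) = 0 := by
        linear_combination hz - hzc - lam * hy + lam * hyc
      rcases mul_eq_zero.mp hdiff with h | h
      · exact absurd (by linear_combination -h) hlamne
      · linear_combination h
    set t : ℝ := Complex.normSq a - 1 with htdef
    have hbc : b * c = (t : ℂ) := by
      rw [htdef]
      push_cast
      rw [← Complex.mul_conj]
      linear_combination -hdetB1 + a * hd
    have htne : t ≠ 0 := by
      intro h
      rw [h] at hbc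
      simp at hbc
      rcases hbc with h' | h'
      · exact hbne h'
      · exact hcne h'
    set n : ℝ := Complex.normSq b with hndef
    have hnpos : 0 < n := by
      rw [hndef]; exact Complex.normSq_pos.mpr hbne
    have hnne : (n : ℂ) ≠ 0 := by
      simp only [ne_eq, Complex.ofReal_eq_zero]
      exact ne_of_gt hnpos
    have hbconj : b * conj b = (n : ℂ) := by rw [hndef]; exact Complex.mul_conj b
    have hcb : c = ((t / n : ℝ) : ℂ) * conj b := by
      apply mul_left_cancel₀ hbne
      rw [hbc]
      push_cast
      rw [show b * ((t:ℂ) / (n:ℂ) * conj b) = (t:ℂ) / (n:ℂ) * (b * conj b) by ring, hbconj]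
      field_simp
    clear_value t n
    have hconj : conj lam = lam⁻¹ := by rw [hlaminv, hκdef]
    have hD : ∀ (p q : ℂ), p * q = 1 →
        (!![p,0;0,(1:ℂ)] : Mat2) * A1 * !![q,0;0,1] = !![lam, 0; 0, lam⁻¹] := by
      intro p q hpq
      rw [hA1eta, sandwich, mul_zero, zero_mul]
      have e : p * lam * q = lam := by
        rw [mul_comm p lam, mul_assoc, hpq, mul_one]
      rw [e]
    rcases lt_or_gt_of_ne htne with ht | ht
    · -- t < 0 : unitary case
      set s : ℝ := Real.sqrt (-t / n) with hsdef
      have hsq2 : s ^ 2 = -t / n := by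
        rw [hsdef]
        exact Real.sq_sqrt (le_of_lt (div_pos (by linarith) hnpos))
      have hspos : 0 < s := by
        rw [hsdef]
        exact Real.sqrt_pos.mpr (div_pos (by linarith) hnpos)
      have hsne : (s : ℂ) ≠ 0 := by
        simp only [ne_eq, Complex.ofReal_eq_zero]
        exact ne_of_gt hspos
      have hs2c : ((s : ℂ)) ^ 2 = -(t : ℂ) / (n : ℂ) := by
        have := congrArg (Complex.ofReal) hsq2
        push_cast at this
        exact this
      clear_value s
      refine ⟨!![(s:ℂ),0;0,1] * Qi, Q * !![(s:ℂ)⁻¹,0;0,1], ?_, ?_, Or.inr ⟨?_, ?_⟩⟩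
      · calc !![(s:ℂ),0;0,1] * Qi * (Q * !![(s:ℂ)⁻¹,0;0,1])
            = !![(s:ℂ),0;0,1] * (Qi * Q) * !![(s:ℂ)⁻¹,0;0,1] := by simp only [Matrix.mul_assoc]
          _ = 1 := by rw [hQ2, mul_one]; exact diag_mul _ _ (mul_inv_cancel₀ hsne)
      · calc Q * !![(s:ℂ)⁻¹,0;0,1] * (!![(s:ℂ),0;0,1] * Qi)
            = Q * (!![(s:ℂ)⁻¹,0;0,(1:ℂ)] * !![(s:ℂ),0;0,1]) * Qi := by simp only [Matrix.mul_assoc]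
          _ = 1 := by rw [diag_mul _ _ (inv_mul_cancel₀ hsne), mul_one, hQ1]
      · have e : !![(s:ℂ),0;0,1] * Qi * A * (Q * !![(s:ℂ)⁻¹,0;0,1])
            = !![(s:ℂ),0;0,(1:ℂ)] * A1 * !![(s:ℂ)⁻¹,0;0,1] := by
          rw [hA1def]; simp only [Matrix.mul_assoc]
        rw [e, hD _ _ (mul_inv_cancel₀ hsne)]
        rw [Matrix.mem_unitaryGroup_iff, star_fin_two]
        ext i j
        fin_cases i <;> fin_cases j <;>
          simp [Matrix.mul_fin_two, Matrix.one_apply, hconj, map_inv₀, inv_inv,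
            mul_inv_cancel₀ hlam0, inv_mul_cancel₀ hlam0]
      · have e : !![(s:ℂ),0;0,1] * Qi * B * (Q * !![(s:ℂ)⁻¹,0;0,1])
            = !![(s:ℂ),0;0,(1:ℂ)] * B1 * !![(s:ℂ)⁻¹,0;0,1] := by
          rw [hB1def]; simp only [Matrix.mul_assoc]
        rw [e, hB1eta, sandwich]
        have e2 : (s:ℂ) * a * (s:ℂ)⁻¹ = a := by
          rw [mul_comm ((s:ℂ)) a, mul_assoc, mul_inv_cancel₀ hsne, mul_one]
        have hns2 : (n:ℂ) * ((s:ℂ))^2 = -(t:ℂ) := by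
          rw [hs2c]
          field_simp
          try ring
        have e3 : ((t / n : ℝ) : ℂ) * conj b * (s:ℂ)⁻¹ = -(s:ℂ) * conj b := by
          push_cast
          rw [div_mul_eq_mul_div, div_mul_eq_mul_div, div_eq_iff hnne]
          field_simp
          linear_combination conj b * hns2
        rw [e2, hd, hcb, e3]
        rw [Matrix.mem_unitaryGroup_iff, star_fin_two]
        have hnaconj : a * conj a = ((t : ℂ) + 1) := by
          rw [Complex.mul_conj, htdef]; push_cast; ring
        ext i j
        fin_cases i <;> fin_cases j
        · simp only [Matrix.mul_fin_two, Matrix.cons_val', Matrix.cons_val_zero,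
            Matrix.cons_val_one, Matrix.head_cons, Matrix.head_fin_const, Matrix.empty_val',
            Matrix.cons_val_fin_one, Matrix.of_apply, _root_.map_mul, map_neg,
            Complex.conj_conj, Complex.conj_ofReal, Matrix.one_apply_eq,
            Fin.zero_eta, Fin.mk_one, Fin.isValue]
          linear_combination hnaconj + ((s:ℂ))^2 * hbconj + hns2
        · simp [Matrix.mul_fin_two, Matrix.one_apply]
          ring
        · simp [Matrix.mul_fin_two, Matrix.one_apply]
          ring
        · simp only [Matrix.mul_fin_two, Matrix.cons_val', Matrix.cons_val_zero,
            Matrix.cons_val_one, Matrix.head_cons, Matrix.head_fin_const, Matrix.empty_val',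
            Matrix.cons_val_fin_one, Matrix.of_apply, _root_.map_mul, map_neg,
            Complex.conj_conj, Complex.conj_ofReal, Matrix.one_apply_eq,
            Fin.zero_eta, Fin.mk_one, Fin.isValue]
          linear_combination ((s:ℂ))^2 * hbconj + hns2 + hnaconj
    · -- t > 0 : SU(1,1), conjugate by Cayley into SL(2,ℝ)
      set s : ℝ := Real.sqrt (t / n) with hsdef
      have hsq2 : s ^ 2 = t / n := by
        rw [hsdef]
        exact Real.sq_sqrt (le_of_lt (div_pos (by linarith) hnpos))
      have hspos : 0 < s := by
        rw [hsdef]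
        exact Real.sqrt_pos.mpr (div_pos (by linarith) hnpos)
      have hsne : (s : ℂ) ≠ 0 := by
        simp only [ne_eq, Complex.ofReal_eq_zero]
        exact ne_of_gt hspos
      have hs2c : ((s : ℂ)) ^ 2 = (t : ℂ) / (n : ℂ) := by
        have := congrArg (Complex.ofReal) hsq2
        push_cast at this
        exact this
      clear_value s
      obtain ⟨hT1, hT2⟩ := Tcay_pair
      refine ⟨Tcay * (!![(s:ℂ),0;0,1] * Qi), Q * !![(s:ℂ)⁻¹,0;0,1] * Tcayi, ?_, ?_,
        Or.inl ⟨?_, ?_⟩⟩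
      · calc Tcay * (!![(s:ℂ),0;0,1] * Qi) * (Q * !![(s:ℂ)⁻¹,0;0,1] * Tcayi)
            = Tcay * (!![(s:ℂ),0;0,1] * (Qi * Q) * !![(s:ℂ)⁻¹,0;0,1]) * Tcayi := by
              simp only [Matrix.mul_assoc]
          _ = 1 := by
              rw [hQ2, mul_one, diag_mul _ _ (mul_inv_cancel₀ hsne), mul_one, hT1]
      · calc Q * !![(s:ℂ)⁻¹,0;0,1] * Tcayi * (Tcay * (!![(s:ℂ),0;0,1] * Qi))
            = Q * (!![(s:ℂ)⁻¹,0;0,1] * (Tcayi * Tcay) * !![(s:ℂ),0;0,1]) * Qi := by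
              simp only [Matrix.mul_assoc]
          _ = 1 := by
              rw [hT2, mul_one, diag_mul _ _ (inv_mul_cancel₀ hsne), mul_one, hQ1]
      · have e : Tcay * (!![(s:ℂ),0;0,1] * Qi) * A * (Q * !![(s:ℂ)⁻¹,0;0,1] * Tcayi)
            = Tcay * (!![(s:ℂ),0;0,(1:ℂ)] * A1 * !![(s:ℂ)⁻¹,0;0,1]) * Tcayi := by
          rw [hA1def]; simp only [Matrix.mul_assoc]
        rw [e, hD _ _ (mul_inv_cancel₀ hsne)]
        intro i j
        apply cayley_real
        · simp
        · simp [hconj]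
      · have e : Tcay * (!![(s:ℂ),0;0,1] * Qi) * B * (Q * !![(s:ℂ)⁻¹,0;0,1] * Tcayi)
            = Tcay * (!![(s:ℂ),0;0,(1:ℂ)] * B1 * !![(s:ℂ)⁻¹,0;0,1]) * Tcayi := by
          rw [hB1def]; simp only [Matrix.mul_assoc]
        rw [e, hB1eta, sandwich]
        have e2 : (s:ℂ) * a * (s:ℂ)⁻¹ = a := by
          rw [mul_comm ((s:ℂ)) a, mul_assoc, mul_inv_cancel₀ hsne, mul_one]
        have hns2 : (n:ℂ) * ((s:ℂ))^2 = (t:ℂ) := by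
          rw [hs2c]
          field_simp
          try ring
        have e3 : ((t / n : ℝ) : ℂ) * conj b * (s:ℂ)⁻¹ = (s:ℂ) * conj b := by
          push_cast
          rw [div_mul_eq_mul_div, div_mul_eq_mul_div, div_eq_iff hnne]
          field_simp
          linear_combination (-(conj b)) * hns2
        rw [e2, hd, hcb, e3]
        intro i j
        apply cayley_real
        · simp [_root_.map_mul, Complex.conj_ofReal]
        · simp
lemma conjInv2 {P Pi : Mat2} (h1 : P * Pi = 1) (h2 : Pi * P = 1) (C : SL2) :
    P * (↑(C⁻¹) : Mat2) * Pi = (P * ↑C * Pi)⁻¹ := by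
  symm
  apply Matrix.inv_eq_right_inv
  rw [conj_chain h2]
  rw [← Matrix.SpecialLinearGroup.coe_mul, mul_inv_cancel]
  simp [h1]

lemma closure_real (A B : SL2) (P Pi : Mat2) (h1 : P * Pi = 1) (h2 : Pi * P = 1)
    (hA : IsRealM (P * ↑A * Pi)) (hB : IsRealM (P * ↑B * Pi)) :
    ∀ C ∈ Subgroup.closure {A, B}, IsRealM (P * ↑C * Pi) := by
  intro C hC
  induction hC using Subgroup.closure_induction with
  | mem x hx =>
    rcases hx with h | h
    · rw [h]; exact hA
    · rw [Set.mem_singleton_iff] at h; rw [h]; exact hB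
  | one => simpa [Matrix.SpecialLinearGroup.coe_one, h1] using isRealM_one
  | mul x y hx hy ihx ihy =>
    rw [Matrix.SpecialLinearGroup.coe_mul, ← conj_chain h2]
    exact isRealM_mul ihx ihy
  | inv x hx ih =>
    rw [conjInv2 h1 h2]
    set M := P * (x : Mat2) * Pi with hM
    have hdet : M.det = 1 := by
      rw [hM]
      exact (det_conj h2).trans (Matrix.SpecialLinearGroup.det_coe x)
    have hinv : M⁻¹ = M.adjugate := by
      rw [Matrix.inv_def, hdet]; simp
    rw [hinv, Matrix.adjugate_fin_two]
    intro i j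
    fin_cases i <;> fin_cases j <;>
      simp [Complex.neg_im, ih 1 1, ih 0 1, ih 1 0, ih 0 0]

lemma closure_unitary (A B : SL2) (P Pi : Mat2) (h1 : P * Pi = 1) (h2 : Pi * P = 1)
    (hA : (P * ↑A * Pi) ∈ Matrix.unitaryGroup (Fin 2) ℂ)
    (hB : (P * ↑B * Pi) ∈ Matrix.unitaryGroup (Fin 2) ℂ) :
    ∀ C ∈ Subgroup.closure {A, B}, (P * ↑C * Pi) ∈ Matrix.unitaryGroup (Fin 2) ℂ := by
  intro C hC
  induction hC using Subgroup.closure_induction with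
  | mem x hx =>
    rcases hx with h | h
    · rw [h]; exact hA
    · rw [Set.mem_singleton_iff] at h; rw [h]; exact hB
  | one =>
    have : P * ((1 : SL2) : Mat2) * Pi = 1 := by
      simp [Matrix.SpecialLinearGroup.coe_one, h1]
    rw [this]; exact one_mem _
  | mul x y hx hy ihx ihy =>
    rw [Matrix.SpecialLinearGroup.coe_mul, ← conj_chain h2]
    exact mul_mem ihx ihy
  | inv x hx ih =>
    rw [conjInv2 h1 h2]
    have hstar : (P * (x : Mat2) * Pi)⁻¹ = star (P * (x : Mat2) * Pi) :=
      Matrix.inv_eq_left_inv (Matrix.mem_unitaryGroup_iff'.mp ih)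
    rw [hstar]
    exact Unitary.star_mem ih

lemma key (A B : Mat2) (hdA : A.det = 1) (hdB : B.det = 1)
    (hcom : NoCommonEig A B)
    (hA : (A.trace).im = 0) (hB : (B.trace).im = 0) (hAB : ((A * B).trace).im = 0) :
    ∃ P Pi : Mat2, P * Pi = 1 ∧ Pi * P = 1 ∧
      ((IsRealM (P * A * Pi) ∧ IsRealM (P * B * Pi)) ∨
       ((P * A * Pi) ∈ Matrix.unitaryGroup (Fin 2) ℂ ∧
        (P * B * Pi) ∈ Matrix.unitaryGroup (Fin 2) ℂ)) := by
  obtain ⟨s, hs⟩ := IsAlgClosed.exists_pow_nat_eq (k := ℂ) (A.trace ^ 2 - 4) (n := 2)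
    (by norm_num)
  set lam : ℂ := (A.trace + s) / 2 with hlam
  have hchar : lam ^ 2 - A.trace * lam + 1 = 0 := by
    rw [hlam]
    field_simp
    linear_combination hs
  obtain ⟨v, hv0, hv⟩ := eig_of_root A hdA lam hchar
  by_cases hsqone : lam ^ 2 = 1
  · obtain ⟨P, Pi, h1, h2, hrA, hrB⟩ :=
      key_case3 A B hdA hdB hcom hB hAB lam v hv0 hv hsqone
    exact ⟨P, Pi, h1, h2, Or.inl ⟨hrA, hrB⟩⟩
  · exact key_case12 A B hdA hdB hcom hA hB hAB lam v hv0 hv hchar hsqone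

/-- Matrix form of Lemma 1: if `A, B ∈ SL(2,ℂ)` have no common eigenvector and
`tr A`, `tr B`, `tr (A*B)` are all real, then the subgroup generated by `A` and `B`
is simultaneously conjugate in `GL(2,ℂ)` either into the real matrices or into the
unitary matrices. -/
theorem conj_subgroup_real_or_unitary (A B : Matrix.SpecialLinearGroup (Fin 2) ℂ)
    (hcommon : ¬ ∃ v : Fin 2 → ℂ, v ≠ 0 ∧
      (∃ μ : ℂ, (A : Matrix (Fin 2) (Fin 2) ℂ).mulVec v = μ • v) ∧
      (∃ ν : ℂ, (B : Matrix (Fin 2) (Fin 2) ℂ).mulVec v = ν • v))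
    (hA : (Matrix.trace ((A : Matrix (Fin 2) (Fin 2) ℂ))).im = 0)
    (hB : (Matrix.trace ((B : Matrix (Fin 2) (Fin 2) ℂ))).im = 0)
    (hAB : (Matrix.trace ((A * B : Matrix.SpecialLinearGroup (Fin 2) ℂ) :
        Matrix (Fin 2) (Fin 2) ℂ)).im = 0) :
    ∃ P : GL (Fin 2) ℂ,
      (∀ C ∈ Subgroup.closure {A, B}, ∀ i j : Fin 2,
        (((P : Matrix (Fin 2) (Fin 2) ℂ) *
          ((C : Matrix.SpecialLinearGroup (Fin 2) ℂ) : Matrix (Fin 2) (Fin 2) ℂ) *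
          ((P⁻¹ : GL (Fin 2) ℂ) : Matrix (Fin 2) (Fin 2) ℂ)) i j).im = 0) ∨
      (∀ C ∈ Subgroup.closure {A, B},
        ((P : Matrix (Fin 2) (Fin 2) ℂ) *
          ((C : Matrix.SpecialLinearGroup (Fin 2) ℂ) : Matrix (Fin 2) (Fin 2) ℂ) *
          ((P⁻¹ : GL (Fin 2) ℂ) : Matrix (Fin 2) (Fin 2) ℂ)) ∈
          Matrix.unitaryGroup (Fin 2) ℂ) := by
  have hAB' : ((A : Mat2) * (B : Mat2)).trace.im = 0 := by
    rwa [← Matrix.SpecialLinearGroup.coe_mul]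
  obtain ⟨P, Pi, h1, h2, hkey⟩ := key (A : Mat2) (B : Mat2)
    (Matrix.SpecialLinearGroup.det_coe A) (Matrix.SpecialLinearGroup.det_coe B)
    hcommon hA hB hAB'
  refine ⟨⟨P, Pi, h1, h2⟩, ?_⟩
  rcases hkey with ⟨hrA, hrB⟩ | ⟨huA, huB⟩
  · left
    intro C hC i j
    exact closure_real A B P Pi h1 h2 hrA hrB C hC i j
  · right
    intro C hC
    exact closure_unitary A B P Pi h1 h2 huA huB C hC
end

section
/- Let Γ be a subgroup of SL(2,ℂ) such that every element of Γ has real trace, the elements of Γ have no common eigenvector in ℂ², and Γ contains an element A with |tr(A)| > 2. Then there exists P ∈ GL(2,ℂ) such that P·C·P⁻¹ has all real entries for every C ∈ Γ (i.e. Γ is conjugate to a subgroup of SL(2,ℝ)). -/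
open Matrix Complex



lemma key_sep (l m x y : ℂ) (hl : l.im = 0) (hm : m.im = 0) (hlm : l ≠ m)
    (h1 : (x + y).im = 0) (h2 : (l * x + m * y).im = 0) : x.im = 0 ∧ y.im = 0 := by
  have h1' : x.im + y.im = 0 := by simpa using h1
  have h2' : l.re * x.im + m.re * y.im = 0 := by
    simpa [Complex.add_im, Complex.mul_im, hl, hm] using h2
  have hre : l.re ≠ m.re := by
    intro h
    exact hlm (Complex.ext h (hl.trans hm.symm))
  have hy : y.im = -x.im := by linarith
  rw [hy] at h2'
  have hx : (l.re - m.re) * x.im = 0 := by ring_nf; linarith [h2']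
  have hx0 : x.im = 0 := by
    rcases mul_eq_zero.mp hx with h | h
    · exact absurd (sub_eq_zero.mp h) hre
    · exact h
  exact ⟨hx0, by linarith⟩

lemma stage3 (S : Set (Matrix (Fin 2) (Fin 2) ℂ))
    (hmul : ∀ M ∈ S, ∀ N ∈ S, M * N ∈ S)
    (htr : ∀ M ∈ S, (Matrix.trace M).im = 0)
    (l m : ℂ) (hl : l.im = 0) (hm : m.im = 0) (hlm : l ≠ m)
    (hD : !![l, 0; 0, m] ∈ S)
    (B₀ : Matrix (Fin 2) (Fin 2) ℂ) (hB₀ : B₀ ∈ S)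
    (hc0im : (B₀ 1 0).im = 0) (hc0 : B₀ 1 0 ≠ 0)
    (B₁ : Matrix (Fin 2) (Fin 2) ℂ) (hB₁ : B₁ ∈ S) (hb1 : B₁ 0 1 ≠ 0) :
    ∀ M ∈ S, ∀ i j, (M i j).im = 0 := by
  have hdiag : ∀ M ∈ S, (M 0 0).im = 0 ∧ (M 1 1).im = 0 := by
    intro M hM
    have h1 := htr M hM
    have h2 := htr _ (hmul _ hD _ hM)
    have e1 : Matrix.trace M = M 0 0 + M 1 1 := by simp [Matrix.trace_fin_two]
    have e2 : Matrix.trace (!![l, 0; 0, m] * M) = l * M 0 0 + m * M 1 1 := by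
      simp [Matrix.trace_fin_two, Matrix.mul_apply, Fin.sum_univ_two, Matrix.vecMul, dotProduct, Fin.sum_univ_two]
    rw [e1] at h1; rw [e2] at h2
    exact key_sep l m _ _ hl hm hlm h1 h2
  have hb : ∀ M ∈ S, (M 0 1).im = 0 := by
    intro M hM
    have h := (hdiag _ (hmul _ hB₀ _ hM)).2
    have e : (B₀ * M) 1 1 = B₀ 1 0 * M 0 1 + B₀ 1 1 * M 1 1 := by
      simp [Matrix.mul_apply, Fin.sum_univ_two]
    rw [e] at h
    have h2 : (B₀ 1 1 * M 1 1).im = 0 := by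
      rw [Complex.mul_im, (hdiag _ hB₀).2, (hdiag _ hM).2]; ring
    have h3 : (B₀ 1 0 * M 0 1).im = 0 := by
      rw [Complex.add_im] at h; linarith
    rw [Complex.mul_im, hc0im] at h3
    have hre : (B₀ 1 0).re ≠ 0 := by
      intro h0; exact hc0 (Complex.ext h0 hc0im)
    have : (B₀ 1 0).re * (M 0 1).im = 0 := by linarith
    rcases mul_eq_zero.mp this with h | h
    · exact absurd h hre
    · exact h
  have hc : ∀ M ∈ S, (M 1 0).im = 0 := by
    intro M hM
    have h := (hdiag _ (hmul _ hB₁ _ hM)).1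
    have e : (B₁ * M) 0 0 = B₁ 0 0 * M 0 0 + B₁ 0 1 * M 1 0 := by
      simp [Matrix.mul_apply, Fin.sum_univ_two]
    rw [e] at h
    have h2 : (B₁ 0 0 * M 0 0).im = 0 := by
      rw [Complex.mul_im, (hdiag _ hB₁).1, (hdiag _ hM).1]; ring
    have h3 : (B₁ 0 1 * M 1 0).im = 0 := by
      rw [Complex.add_im] at h; linarith
    have hb1im : (B₁ 0 1).im = 0 := hb _ hB₁
    rw [Complex.mul_im, hb1im] at h3
    have hre : (B₁ 0 1).re ≠ 0 := by
      intro h0; exact hb1 (Complex.ext h0 hb1im)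
    have : (B₁ 0 1).re * (M 1 0).im = 0 := by linarith
    rcases mul_eq_zero.mp this with h | h
    · exact absurd h hre
    · exact h
  intro M hM i j
  fin_cases i <;> fin_cases j
  · exact (hdiag M hM).1
  · exact hb M hM
  · exact hc M hM
  · exact (hdiag M hM).2



lemma conj_of_comm (P Pinv A D : Matrix (Fin 2) (Fin 2) ℂ)
    (h1 : P * Pinv = 1) (hcomm : A * Pinv = Pinv * D) : P * A * Pinv = D := by
  have h2 : Pinv * P = 1 := mul_eq_one_comm.mp h1
  calc P * A * Pinv = P * (A * Pinv) := by rw [mul_assoc]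
    _ = P * (Pinv * D) := by rw [hcomm]
    _ = (P * Pinv) * D := by rw [mul_assoc]
    _ = D := by rw [h1, one_mul]

lemma exists_inv_of_det (Pinv : Matrix (Fin 2) (Fin 2) ℂ) (h : Pinv.det ≠ 0) :
    ∃ P, P * Pinv = 1 ∧ Pinv * P = 1 :=
  ⟨Pinv⁻¹, Matrix.nonsing_inv_mul _ (isUnit_iff_ne_zero.mpr h),
    Matrix.mul_nonsing_inv _ (isUnit_iff_ne_zero.mpr h)⟩

lemma diagonalize (A : Matrix (Fin 2) (Fin 2) ℂ) (hdet : A.det = 1)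
    (l m : ℂ) (hsum : l + m = Matrix.trace A) (hprod : l * m = 1) (hlm : l ≠ m) :
    ∃ P Pinv : Matrix (Fin 2) (Fin 2) ℂ, P * Pinv = 1 ∧ Pinv * P = 1 ∧
      P * A * Pinv = !![l, 0; 0, m] := by
  set a := A 0 0 with ha
  set b := A 0 1 with hb
  set c := A 1 0 with hc
  set d := A 1 1 with hd
  have hdet' : a * d - b * c = 1 := by rw [Matrix.det_fin_two] at hdet; exact hdet
  have htr' : l + m = a + d := by rw [Matrix.trace_fin_two] at hsum; exact hsum
  have hq_l : l * l - (a + d) * l + 1 = 0 := by linear_combination l * htr' - hprod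
  have hq_m : m * m - (a + d) * m + 1 = 0 := by linear_combination m * htr' - hprod
  by_cases hc0 : c ≠ 0
  · -- eigenvectors (l - d, c), (m - d, c)
    set Pinv : Matrix (Fin 2) (Fin 2) ℂ := !![l - d, m - d; c, c] with hPinv
    have hdp : Pinv.det ≠ 0 := by
      rw [hPinv, Matrix.det_fin_two_of]
      have : (l - d) * c - (m - d) * c = (l - m) * c := by ring
      rw [this]
      exact mul_ne_zero (sub_ne_zero.mpr hlm) hc0
    obtain ⟨P, h1, h2⟩ := exists_inv_of_det Pinv hdp
    refine ⟨P, Pinv, h1, h2, conj_of_comm P Pinv A _ h1 ?_⟩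
    ext i j
    fin_cases i <;> fin_cases j <;>
      simp [hPinv, Matrix.mul_apply, Fin.sum_univ_two, ← ha, ← hb, ← hc, ← hd]
    · linear_combination -hq_l - hdet'
    · linear_combination -hq_m - hdet'
    · ring
    · ring
  · push_neg at hc0
    by_cases hb0 : b ≠ 0
    · set Pinv : Matrix (Fin 2) (Fin 2) ℂ := !![b, b; l - a, m - a] with hPinv
      have hdp : Pinv.det ≠ 0 := by
        rw [hPinv, Matrix.det_fin_two_of]
        have : b * (m - a) - b * (l - a) = b * (m - l) := by ring
        rw [this]
        exact mul_ne_zero hb0 (sub_ne_zero.mpr (Ne.symm hlm))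
      obtain ⟨P, h1, h2⟩ := exists_inv_of_det Pinv hdp
      refine ⟨P, Pinv, h1, h2, conj_of_comm P Pinv A _ h1 ?_⟩
      have had : a * d = 1 := by linear_combination hdet' + b * hc0
      ext i j
      fin_cases i <;> fin_cases j <;>
        simp [hPinv, Matrix.mul_apply, Fin.sum_univ_two, ← ha, ← hb, ← hc, ← hd, hc0]
      · ring
      · ring
      · linear_combination -hq_l - had
      · linear_combination -hq_m - had
    · push_neg at hb0
      have had : a * d = 1 := by linear_combination hdet' + b * hc0
      have hfac : (a - l) * (a - m) = 0 := by
        linear_combination (-a) * htr' + hprod - had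
      rcases mul_eq_zero.mp hfac with h | h
      · have hal : a = l := sub_eq_zero.mp h
        have hdm : d = m := by linear_combination -htr' - hal
        have hAeq : A = !![l, 0; 0, m] := by
          rw [Matrix.eta_fin_two A, ← ha, ← hb, ← hc, ← hd, hb0, hc0, hal, hdm]
        exact ⟨1, 1, one_mul 1, one_mul 1, by rw [one_mul, mul_one, hAeq]⟩
      · have ham : a = m := sub_eq_zero.mp h
        have hdl : d = l := by linear_combination -htr' - ham
        have hAeq : A = !![m, 0; 0, l] := by
          rw [Matrix.eta_fin_two A, ← ha, ← hb, ← hc, ← hd, hb0, hc0, ham, hdl]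
        have hsw : !![(0:ℂ),1;1,0] * !![(0:ℂ),1;1,0] = 1 := by
          ext i j
          fin_cases i <;> fin_cases j <;>
            simp [Matrix.mul_apply, Fin.sum_univ_two, Matrix.one_apply]
        refine ⟨!![0,1;1,0], !![0,1;1,0], hsw, hsw, ?_⟩
        rw [hAeq]
        ext i j
        fin_cases i <;> fin_cases j <;>
          simp [Matrix.mul_apply, Fin.sum_univ_two]

lemma conj_set_props (S : Set (Matrix (Fin 2) (Fin 2) ℂ)) (P Pinv : Matrix (Fin 2) (Fin 2) ℂ)
    (h1 : P * Pinv = 1) (h2 : Pinv * P = 1)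
    (hmul : ∀ M ∈ S, ∀ N ∈ S, M * N ∈ S)
    (htr : ∀ M ∈ S, (Matrix.trace M).im = 0)
    (hirr : ∀ v : Fin 2 → ℂ, v ≠ 0 → ∃ M ∈ S, ∀ μ : ℂ, M.mulVec v ≠ μ • v) :
    (∀ M' ∈ {N | ∃ M ∈ S, N = P * M * Pinv}, ∀ N' ∈ {N | ∃ M ∈ S, N = P * M * Pinv},
        M' * N' ∈ {N | ∃ M ∈ S, N = P * M * Pinv}) ∧
    (∀ M' ∈ {N | ∃ M ∈ S, N = P * M * Pinv}, (Matrix.trace M').im = 0) ∧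
    (∀ v : Fin 2 → ℂ, v ≠ 0 → ∃ M' ∈ {N | ∃ M ∈ S, N = P * M * Pinv},
        ∀ μ : ℂ, M'.mulVec v ≠ μ • v) := by
  refine ⟨?_, ?_, ?_⟩
  · rintro M' ⟨M, hM, rfl⟩ N' ⟨N, hN, rfl⟩
    refine ⟨M * N, hmul M hM N hN, ?_⟩
    calc P * M * Pinv * (P * N * Pinv) = P * M * (Pinv * P) * (N * Pinv) := by
          noncomm_ring
      _ = P * (M * N) * Pinv := by rw [h2, mul_one]; noncomm_ring
  · rintro M' ⟨M, hM, rfl⟩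
    have : Matrix.trace (P * M * Pinv) = Matrix.trace M := by
      rw [Matrix.trace_mul_cycle, h2, one_mul]
    rw [this]; exact htr M hM
  · intro v hv
    have hw : Pinv.mulVec v ≠ 0 := by
      intro h0
      apply hv
      have : (P * Pinv).mulVec v = P.mulVec (Pinv.mulVec v) := (Matrix.mulVec_mulVec v P Pinv).symm
      rw [h1, Matrix.one_mulVec] at this
      rw [this, h0, Matrix.mulVec_zero]
    obtain ⟨M, hM, hMv⟩ := hirr _ hw
    refine ⟨P * M * Pinv, ⟨M, hM, rfl⟩, ?_⟩
    intro μ heq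
    apply hMv μ
    have e1 : (P * M * Pinv).mulVec v = P.mulVec (M.mulVec (Pinv.mulVec v)) := by
      rw [Matrix.mulVec_mulVec, Matrix.mulVec_mulVec]
    rw [e1] at heq
    have h3 : Pinv.mulVec (P.mulVec (M.mulVec (Pinv.mulVec v))) = Pinv.mulVec (μ • v) :=
      congrArg _ heq
    rw [Matrix.mulVec_mulVec (M.mulVec (Pinv.mulVec v)) Pinv P, h2, Matrix.one_mulVec,
      Matrix.mulVec_smul] at h3
    exact h3

lemma core_lemma (S : Set (Matrix (Fin 2) (Fin 2) ℂ))
    (hmul : ∀ M ∈ S, ∀ N ∈ S, M * N ∈ S)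
    (hdet : ∀ M ∈ S, M.det = 1)
    (htr : ∀ M ∈ S, (Matrix.trace M).im = 0)
    (hirr : ∀ v : Fin 2 → ℂ, v ≠ 0 → ∃ M ∈ S, ∀ μ : ℂ, M.mulVec v ≠ μ • v)
    (hA : ∃ A ∈ S, 2 < ‖Matrix.trace A‖) :
    ∃ P Pinv : Matrix (Fin 2) (Fin 2) ℂ, P * Pinv = 1 ∧ Pinv * P = 1 ∧
      ∀ M ∈ S, ∀ i j, ((P * M * Pinv) i j).im = 0 := by
  obtain ⟨A, hAS, hAabs⟩ := hA
  set t := Matrix.trace A with ht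
  have htA : t.im = 0 := htr A hAS
  set T := t.re with hT
  have htT : (T : ℂ) = t := Complex.ext rfl (by simp [htA])
  have habsT : 2 < |T| := by
    rwa [← htT, Complex.norm_real, Real.norm_eq_abs] at hAabs
  have hT4 : 0 < T ^ 2 - 4 := by nlinarith [_root_.sq_abs T, abs_nonneg T]
  set s := Real.sqrt (T ^ 2 - 4) with hs
  have hs2 : s ^ 2 = T ^ 2 - 4 := Real.sq_sqrt (le_of_lt hT4)
  have hspos : 0 < s := Real.sqrt_pos.mpr hT4
  set l : ℂ := (((T + s) / 2 : ℝ) : ℂ) with hldef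
  set m : ℂ := (((T - s) / 2 : ℝ) : ℂ) with hmdef
  have hl : l.im = 0 := Complex.ofReal_im _
  have hm : m.im = 0 := Complex.ofReal_im _
  have hsum : l + m = Matrix.trace A := by
    rw [hldef, hmdef, ← ht, ← htT]
    push_cast
    ring
  have hprodR : ((T + s) / 2) * ((T - s) / 2) = 1 := by nlinarith [hs2]
  have hprod : l * m = 1 := by
    rw [hldef, hmdef, ← Complex.ofReal_mul, hprodR, Complex.ofReal_one]
  have hlm : l ≠ m := by
    intro h
    rw [hldef, hmdef] at h
    have := Complex.ofReal_inj.mp h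
    linarith
  obtain ⟨P₁, P₁inv, hP₁, hP₁', hDiag⟩ := diagonalize A (hdet A hAS) l m hsum hprod hlm
  -- conjugated set S₁
  set S₁ : Set (Matrix (Fin 2) (Fin 2) ℂ) := {N | ∃ M ∈ S, N = P₁ * M * P₁inv} with hS₁
  obtain ⟨hmul₁, htr₁, hirr₁⟩ := conj_set_props S P₁ P₁inv hP₁ hP₁' hmul htr hirr
  have hD₁ : !![l, 0; 0, m] ∈ S₁ := ⟨A, hAS, hDiag.symm⟩
  -- find B₀ with lower-left entry nonzero
  have hB₀ex : ∃ N ∈ S₁, N 1 0 ≠ 0 := by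
    by_contra h
    push_neg at h
    obtain ⟨N, hN, hNv⟩ := hirr₁ ![1, 0] (by
      intro h0
      simpa using congrFun h0 0)
    apply hNv (N 0 0)
    funext i
    fin_cases i <;>
      simp [Matrix.mulVec, dotProduct, Fin.sum_univ_two, h N hN]
  have hB₁ex : ∃ N ∈ S₁, N 0 1 ≠ 0 := by
    by_contra h
    push_neg at h
    obtain ⟨N, hN, hNv⟩ := hirr₁ ![0, 1] (by
      intro h0
      simpa using congrFun h0 1)
    apply hNv (N 1 1)
    funext i
    fin_cases i <;>
      simp [Matrix.mulVec, dotProduct, Fin.sum_univ_two, h N hN]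
  obtain ⟨B₀, hB₀S, hB₀c⟩ := hB₀ex
  obtain ⟨B₁, hB₁S, hB₁b⟩ := hB₁ex
  set c₀ := B₀ 1 0 with hc₀
  set Q : Matrix (Fin 2) (Fin 2) ℂ := !![c₀, 0; 0, 1] with hQ
  set Qinv : Matrix (Fin 2) (Fin 2) ℂ := !![c₀⁻¹, 0; 0, 1] with hQinv
  have hQ1 : Q * Qinv = 1 := by
    ext i j
    fin_cases i <;> fin_cases j <;>
      simp [hQ, hQinv, Matrix.mul_apply, Fin.sum_univ_two, Matrix.one_apply,
        mul_inv_cancel₀ hB₀c]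
  have hQ2 : Qinv * Q = 1 := by
    ext i j
    fin_cases i <;> fin_cases j <;>
      simp [hQ, hQinv, Matrix.mul_apply, Fin.sum_univ_two, Matrix.one_apply,
        inv_mul_cancel₀ hB₀c]
  set S₂ : Set (Matrix (Fin 2) (Fin 2) ℂ) := {N | ∃ M ∈ S₁, N = Q * M * Qinv} with hS₂
  obtain ⟨hmul₂, htr₂, hirr₂⟩ := conj_set_props S₁ Q Qinv hQ1 hQ2 hmul₁ htr₁ hirr₁
  have hD₂ : !![l, 0; 0, m] ∈ S₂ := by
    refine ⟨!![l, 0; 0, m], hD₁, ?_⟩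
    ext i j
    fin_cases i <;> fin_cases j <;>
      simp [hQ, hQinv, Matrix.mul_apply, Fin.sum_univ_two]
    rw [mul_comm c₀ l, mul_assoc, mul_inv_cancel₀ hB₀c, mul_one]
  have hB₀' : Q * B₀ * Qinv ∈ S₂ := ⟨B₀, hB₀S, rfl⟩
  have hB₀'c : (Q * B₀ * Qinv) 1 0 = 1 := by
    simp [hQ, hQinv, Matrix.mul_apply, Fin.sum_univ_two, Matrix.vecMul,
      dotProduct, ← hc₀, mul_inv_cancel₀ hB₀c]
  have hB₁' : Q * B₁ * Qinv ∈ S₂ := ⟨B₁, hB₁S, rfl⟩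
  have hB₁'b : (Q * B₁ * Qinv) 0 1 = c₀ * B₁ 0 1 := by
    simp [hQ, hQinv, Matrix.mul_apply, Fin.sum_univ_two, Matrix.vecMul,
      dotProduct]
  have hreal := stage3 S₂ hmul₂ htr₂ l m hl hm hlm hD₂
    (Q * B₀ * Qinv) hB₀' (by rw [hB₀'c]; simp) (by rw [hB₀'c]; exact one_ne_zero)
    (Q * B₁ * Qinv) hB₁' (by rw [hB₁'b]; exact mul_ne_zero hB₀c hB₁b)
  refine ⟨Q * P₁, P₁inv * Qinv, ?_, ?_, ?_⟩
  · calc Q * P₁ * (P₁inv * Qinv) = Q * (P₁ * P₁inv) * Qinv := by noncomm_ring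
      _ = 1 := by rw [hP₁, mul_one, hQ1]
  · calc P₁inv * Qinv * (Q * P₁) = P₁inv * (Qinv * Q) * P₁ := by noncomm_ring
      _ = 1 := by rw [hQ2, mul_one, hP₁']
  · intro M hM i j
    have hmem : Q * P₁ * M * (P₁inv * Qinv) ∈ S₂ := by
      refine ⟨P₁ * M * P₁inv, ⟨M, hM, rfl⟩, ?_⟩
      noncomm_ring
    exact hreal _ hmem i j

/-- Matrix form of Lemma 2: a subgroup of `SL(2,ℂ)` all of whose elements have real
trace, whose elements have no common eigenvector, and which contains an element with
`|trace| > 2`, is conjugate in `GL(2,ℂ)` into the real matrices. -/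
theorem conj_subgroup_to_real (Γ : Subgroup (Matrix.SpecialLinearGroup (Fin 2) ℂ))
    (htr : ∀ C ∈ Γ, (Matrix.trace ((C : Matrix.SpecialLinearGroup (Fin 2) ℂ) :
        Matrix (Fin 2) (Fin 2) ℂ)).im = 0)
    (hcommon : ¬ ∃ v : Fin 2 → ℂ, v ≠ 0 ∧ ∀ C ∈ Γ,
      ∃ μ : ℂ, ((C : Matrix.SpecialLinearGroup (Fin 2) ℂ) :
        Matrix (Fin 2) (Fin 2) ℂ).mulVec v = μ • v)
    (hhyp : ∃ A ∈ Γ, 2 < ‖(Matrix.trace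
        ((A : Matrix.SpecialLinearGroup (Fin 2) ℂ) : Matrix (Fin 2) (Fin 2) ℂ))‖) :
    ∃ P : GL (Fin 2) ℂ, ∀ C ∈ Γ, ∀ i j : Fin 2,
      (((P : Matrix (Fin 2) (Fin 2) ℂ) *
        ((C : Matrix.SpecialLinearGroup (Fin 2) ℂ) : Matrix (Fin 2) (Fin 2) ℂ) *
        ((P⁻¹ : GL (Fin 2) ℂ) : Matrix (Fin 2) (Fin 2) ℂ)) i j).im = 0 := by
  set S : Set (Matrix (Fin 2) (Fin 2) ℂ) :=
    {M | ∃ C ∈ Γ, ((C : Matrix.SpecialLinearGroup (Fin 2) ℂ) :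
      Matrix (Fin 2) (Fin 2) ℂ) = M} with hS
  have hmul : ∀ M ∈ S, ∀ N ∈ S, M * N ∈ S := by
    rintro M ⟨C, hC, rfl⟩ N ⟨C', hC', rfl⟩
    exact ⟨C * C', mul_mem hC hC', by simp⟩
  have hdet : ∀ M ∈ S, M.det = 1 := by
    rintro M ⟨C, hC, rfl⟩
    exact C.2
  have htr' : ∀ M ∈ S, (Matrix.trace M).im = 0 := by
    rintro M ⟨C, hC, rfl⟩
    exact htr C hC
  have hirr : ∀ v : Fin 2 → ℂ, v ≠ 0 → ∃ M ∈ S, ∀ μ : ℂ, M.mulVec v ≠ μ • v := by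
    intro v hv
    push_neg at hcommon
    obtain ⟨C, hC, hCv⟩ := hcommon v hv
    exact ⟨_, ⟨C, hC, rfl⟩, hCv⟩
  have hA : ∃ A ∈ S, 2 < ‖Matrix.trace A‖ := by
    obtain ⟨A, hA, habs⟩ := hhyp
    exact ⟨_, ⟨A, hA, rfl⟩, habs⟩
  obtain ⟨P, Pinv, h1, h2, hre⟩ := core_lemma S hmul hdet htr' hirr hA
  refine ⟨⟨P, Pinv, h1, h2⟩, ?_⟩
  intro C hC i j
  exact hre _ ⟨C, hC, rfl⟩ i j
end
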